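/- Let 0 < r < R, let (x0,y0,0) be a real point of the torus T = 0 and the quadric Q = 0, and assume x0^2 + y0^2 ≠ 0. Then the Jacobian matrix of (T,Q) at (x0,y0,0) has rank at most one if and only if (x0,y0) is a non-transversal intersection point of the curves Δ_T = 0 and Δ_Q = 0, i.e., Δ_T(x0,y0) = Δ_Q(x0,y0) = 0 and the Jacobian determinant of (Δ_T, Δ_Q) vanishes at (x0,y0). -/

import Mathlib

/-- The torus polynomial `T(x,y,z) = (x^2+y^2+z^2+R^2-r^2)^2 - 4R^2(x^2+y^2)`. -/
def torusT (R r : ℝ) (x y z : ℝ) : ℝ :=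
  (x ^ 2 + y ^ 2 + z ^ 2 + R ^ 2 - r ^ 2) ^ 2 - 4 * R ^ 2 * (x ^ 2 + y ^ 2)

/-- The quadric polynomial `Q(x,y,z)`. -/
def quadQ (a b d e f g h i j : ℝ) (x y z : ℝ) : ℝ :=
  z ^ 2 + (e * x + f * y + i) * z
    + (a * x ^ 2 + b * y ^ 2 + d * x * y + g * x + h * y + j)

/-- `Δ_T(x,y)` for the torus. -/
def delT (R r : ℝ) (x y : ℝ) : ℝ :=
  (R ^ 2 + 2 * R * r + r ^ 2 - x ^ 2 - y ^ 2) * (R ^ 2 - 2 * R * r + r ^ 2 - x ^ 2 - y ^ 2)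

/-- `Δ_Q(x,y)` for the quadric. -/
def delQ (a b d e f g h i j : ℝ) (x y : ℝ) : ℝ :=
  (e * x + f * y + i) ^ 2
    - 4 * (a * x ^ 2 + b * y ^ 2 + d * x * y + g * x + h * y + j)

/- Derivative computations. -/

lemma dTx (R r y0 x0 : ℝ) :
    deriv (fun x => torusT R r x y0 0) x0
      = -4 * x0 * (R ^ 2 + r ^ 2 - x0 ^ 2 - y0 ^ 2) := by
  have A := (((((hasDerivAt_pow 2 x0).add_const (y0 ^ 2)).add_const
      ((0:ℝ) ^ 2)).add_const (R ^ 2)).sub_const (r ^ 2)).pow 2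
  have C := ((hasDerivAt_pow 2 x0).add_const (y0 ^ 2)).const_mul (4 * R ^ 2)
  have D := A.sub C
  simp only [torusT]
  erw [D.deriv]
  norm_num; ring

lemma dTy (R r x0 y0 : ℝ) :
    deriv (fun y => torusT R r x0 y 0) y0
      = -4 * y0 * (R ^ 2 + r ^ 2 - x0 ^ 2 - y0 ^ 2) := by
  have A := (((((hasDerivAt_pow 2 y0).const_add (x0 ^ 2)).add_const
      ((0:ℝ) ^ 2)).add_const (R ^ 2)).sub_const (r ^ 2)).pow 2
  have C := ((hasDerivAt_pow 2 y0).const_add (x0 ^ 2)).const_mul (4 * R ^ 2)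
  have D := A.sub C
  simp only [torusT]
  erw [D.deriv]
  norm_num; ring

lemma dTz (R r x0 y0 : ℝ) :
    deriv (fun z => torusT R r x0 y0 z) 0 = 0 := by
  have A := (((((hasDerivAt_pow 2 (0:ℝ)).const_add (x0 ^ 2 + y0 ^ 2)).add_const
      (R ^ 2)).sub_const (r ^ 2)).pow 2).sub_const (4 * R ^ 2 * (x0 ^ 2 + y0 ^ 2))
  simp only [torusT]
  erw [A.deriv]
  norm_num

lemma dQx (a b d e f g h i j y0 x0 : ℝ) :
    deriv (fun x => quadQ a b d e f g h i j x y0 0) x0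
      = 2 * a * x0 + d * y0 + g := by
  have Hq1 : HasDerivAt (fun x : ℝ => (e * x + f * y0 + i) * 0) (e * 1 * 0) x0 :=
    (((hasDerivAt_id' (x := x0)).const_mul e).add_const (f * y0)).add_const i |>.mul_const 0
  have Hpoly :=
    ((hasDerivAt_pow 2 x0).const_mul a).add_const (b * y0 ^ 2)
      |>.add (((hasDerivAt_id' (x := x0)).const_mul d).mul_const y0)
      |>.add ((hasDerivAt_id' (x := x0)).const_mul g)
      |>.add_const (h * y0) |>.add_const j
  have D := (Hq1.const_add ((0:ℝ) ^ 2)).add Hpoly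
  simp only [quadQ]
  erw [D.deriv]
  norm_num; ring

lemma dQy (a b d e f g h i j x0 y0 : ℝ) :
    deriv (fun y => quadQ a b d e f g h i j x0 y 0) y0
      = 2 * b * y0 + d * x0 + h := by
  have Hq1 : HasDerivAt (fun y : ℝ => (e * x0 + f * y + i) * 0) (f * 1 * 0) y0 :=
    (((hasDerivAt_id' (x := y0)).const_mul f).const_add (e * x0)).add_const i |>.mul_const 0
  have Hpoly' :=
    ((hasDerivAt_pow 2 y0).const_mul b).const_add (a * x0 ^ 2)
      |>.add ((hasDerivAt_id' (x := y0)).const_mul (d * x0))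
      |>.add_const (g * x0)
      |>.add ((hasDerivAt_id' (x := y0)).const_mul h) |>.add_const j
  have D := (Hq1.const_add ((0:ℝ) ^ 2)).add Hpoly'
  simp only [quadQ]
  erw [D.deriv]
  norm_num; ring

lemma dQz (a b d e f g h i j x0 y0 : ℝ) :
    deriv (fun z => quadQ a b d e f g h i j x0 y0 z) 0
      = e * x0 + f * y0 + i := by
  have D := ((hasDerivAt_pow 2 (0:ℝ)).add
      ((hasDerivAt_id' (x := (0:ℝ))).const_mul (e * x0 + f * y0 + i))).add_const
      (a * x0 ^ 2 + b * y0 ^ 2 + d * x0 * y0 + g * x0 + h * y0 + j)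
  simp only [quadQ]
  erw [D.deriv]
  norm_num

lemma ddTx (R r y0 x0 : ℝ) :
    deriv (fun x => delT R r x y0) x0
      = -4 * x0 * (R ^ 2 + r ^ 2 - x0 ^ 2 - y0 ^ 2) := by
  have A := ((hasDerivAt_pow 2 x0).const_sub (R ^ 2 + 2 * R * r + r ^ 2)).sub_const (y0 ^ 2)
  have B := ((hasDerivAt_pow 2 x0).const_sub (R ^ 2 - 2 * R * r + r ^ 2)).sub_const (y0 ^ 2)
  have D := A.mul B
  simp only [delT]
  erw [D.deriv]
  norm_num; ring

lemma ddTy (R r x0 y0 : ℝ) :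
    deriv (fun y => delT R r x0 y) y0
      = -4 * y0 * (R ^ 2 + r ^ 2 - x0 ^ 2 - y0 ^ 2) := by
  have A := ((hasDerivAt_pow 2 y0).const_sub (R ^ 2 + 2 * R * r + r ^ 2 - x0 ^ 2))
  have B := ((hasDerivAt_pow 2 y0).const_sub (R ^ 2 - 2 * R * r + r ^ 2 - x0 ^ 2))
  have D := A.mul B
  simp only [delT]
  erw [D.deriv]
  norm_num; ring

lemma ddQx (a b d e f g h i j y0 x0 : ℝ) :
    deriv (fun x => delQ a b d e f g h i j x y0) x0
      = 2 * (e * x0 + f * y0 + i) * e - 4 * (2 * a * x0 + d * y0 + g) := by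
  have Hq1 := (((hasDerivAt_id' (x := x0)).const_mul e).add_const (f * y0)).add_const i
  have A := Hq1.pow 2
  have Hpoly :=
    ((hasDerivAt_pow 2 x0).const_mul a).add_const (b * y0 ^ 2)
      |>.add (((hasDerivAt_id' (x := x0)).const_mul d).mul_const y0)
      |>.add ((hasDerivAt_id' (x := x0)).const_mul g)
      |>.add_const (h * y0) |>.add_const j
  have D := A.sub (Hpoly.const_mul 4)
  simp only [delQ]
  erw [D.deriv]
  norm_num; ring

lemma ddQy (a b d e f g h i j x0 y0 : ℝ) :
    deriv (fun y => delQ a b d e f g h i j x0 y) y0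
      = 2 * (e * x0 + f * y0 + i) * f - 4 * (2 * b * y0 + d * x0 + h) := by
  have Hq1 := (((hasDerivAt_id' (x := y0)).const_mul f).const_add (e * x0)).add_const i
  have A := Hq1.pow 2
  have Hpoly :=
    ((hasDerivAt_pow 2 y0).const_mul b).const_add (a * x0 ^ 2)
      |>.add ((hasDerivAt_id' (x := y0)).const_mul (d * x0))
      |>.add_const (g * x0)
      |>.add ((hasDerivAt_id' (x := y0)).const_mul h) |>.add_const j
  have D := A.sub (Hpoly.const_mul 4)
  simp only [delQ]
  erw [D.deriv]
  norm_num; ring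

/-- finrank of span of a pair with first vector nonzero. -/
lemma span_pair_finrank_le_one {u v : Fin 3 → ℝ} (hu : u ≠ 0) :
    Module.finrank ℝ ↥(Submodule.span ℝ ({u, v} : Set (Fin 3 → ℝ))) ≤ 1
      ↔ ∃ c : ℝ, v = c • u := by
  constructor
  · intro h
    have h1 : (Submodule.span ℝ ({u} : Set (Fin 3 → ℝ))) ≤ Submodule.span ℝ {u, v} :=
      Submodule.span_mono (by simp)
    have h2 : Module.finrank ℝ ↥(Submodule.span ℝ ({u} : Set (Fin 3 → ℝ))) = 1 :=
      finrank_span_singleton hu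
    have he : (Submodule.span ℝ ({u} : Set (Fin 3 → ℝ))) = Submodule.span ℝ {u, v} :=
      Submodule.eq_of_le_of_finrank_le h1 (by omega)
    have hv : v ∈ Submodule.span ℝ ({u} : Set (Fin 3 → ℝ)) := by
      rw [he]; exact Submodule.subset_span (by simp)
    obtain ⟨c, hc⟩ := Submodule.mem_span_singleton.mp hv
    exact ⟨c, hc.symm⟩
  · rintro ⟨c, rfl⟩
    have hle : Submodule.span ℝ ({u, c • u} : Set (Fin 3 → ℝ))
        ≤ Submodule.span ℝ ({u} : Set (Fin 3 → ℝ)) := by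
      rw [Submodule.span_le]
      rintro w (rfl | rfl)
      · exact Submodule.subset_span rfl
      · exact Submodule.smul_mem _ c (Submodule.subset_span rfl)
    calc Module.finrank ℝ ↥(Submodule.span ℝ ({u, c • u} : Set (Fin 3 → ℝ)))
        ≤ Module.finrank ℝ ↥(Submodule.span ℝ ({u} : Set (Fin 3 → ℝ))) :=
          Submodule.finrank_mono hle
      _ = 1 := finrank_span_singleton hu

/-- For `(x0,y0,0)` a real point of the torus and the quadric with
`x0^2 + y0^2 ≠ 0`: the Jacobian matrix of `(T,Q)` at `(x0,y0,0)` has rank at most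
one iff `(x0,y0)` is a non-transversal intersection point of `Δ_T = 0` and
`Δ_Q = 0`. -/
theorem stmt18 (R r a b d e f g h i j x0 y0 : ℝ) (hr : 0 < r) (hrR : r < R)
    (hT : torusT R r x0 y0 0 = 0) (hQ : quadQ a b d e f g h i j x0 y0 0 = 0)
    (hxy : x0 ^ 2 + y0 ^ 2 ≠ 0) :
    (!![deriv (fun x => torusT R r x y0 0) x0,
        deriv (fun y => torusT R r x0 y 0) y0,
        deriv (fun z => torusT R r x0 y0 z) 0;
        deriv (fun x => quadQ a b d e f g h i j x y0 0) x0,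
        deriv (fun y => quadQ a b d e f g h i j x0 y 0) y0,
        deriv (fun z => quadQ a b d e f g h i j x0 y0 z) 0] : Matrix (Fin 2) (Fin 3) ℝ).rank ≤ 1
      ↔ (delT R r x0 y0 = 0 ∧ delQ a b d e f g h i j x0 y0 = 0
          ∧ deriv (fun x => delT R r x y0) x0 * deriv (fun y => delQ a b d e f g h i j x0 y) y0
            - deriv (fun y => delT R r x0 y) y0
              * deriv (fun x => delQ a b d e f g h i j x y0) x0 = 0) := by
  -- abbreviations
  set s : ℝ := R ^ 2 + r ^ 2 - x0 ^ 2 - y0 ^ 2 with hs_def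
  set q1 : ℝ := e * x0 + f * y0 + i with hq1_def
  set P : ℝ := 2 * a * x0 + d * y0 + g with hP_def
  set S : ℝ := 2 * b * y0 + d * x0 + h with hS_def
  -- basic facts from the hypotheses
  have hq0 : a * x0 ^ 2 + b * y0 ^ 2 + d * x0 * y0 + g * x0 + h * y0 + j = 0 := by
    have := hQ
    simp only [quadQ] at this
    linarith [this]
  have hs2 : s ^ 2 = 4 * R ^ 2 * r ^ 2 := by
    simp only [torusT] at hT
    rw [hs_def]
    nlinarith [hT]
  have hs0 : s ≠ 0 := by
    intro h0
    rw [h0] at hs2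
    nlinarith [sq_nonneg (R * r), mul_pos hr (hr.trans hrR)]
  -- the two rows of the Jacobian
  have hx0y0 : x0 ≠ 0 ∨ y0 ≠ 0 := by
    by_contra hc
    push_neg at hc
    exact hxy (by rw [hc.1, hc.2]; ring)
  -- delT vanishes automatically
  have hdelT : delT R r x0 y0 = 0 := by
    simp only [delT]
    simp only [torusT] at hT
    nlinarith [hT]
  -- delQ = q1^2
  have hdelQ : delQ a b d e f g h i j x0 y0 = q1 ^ 2 := by
    simp only [delQ, hq1_def]
    nlinarith [hq0]
  -- rewrite all derivatives
  rw [dTx, dTy, dTz, dQx, dQy, dQz, ddTx, ddTy, ddQx, ddQy]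
  -- the matrix as two rows
  set u : Fin 3 → ℝ := ![-4 * x0 * s, -4 * y0 * s, 0] with hu_def
  set v : Fin 3 → ℝ := ![P, S, q1] with hv_def
  have hM : (!![(-4 * x0 * (R ^ 2 + r ^ 2 - x0 ^ 2 - y0 ^ 2)),
        (-4 * y0 * (R ^ 2 + r ^ 2 - x0 ^ 2 - y0 ^ 2)), (0:ℝ);
        2 * a * x0 + d * y0 + g, 2 * b * y0 + d * x0 + h,
        e * x0 + f * y0 + i] : Matrix (Fin 2) (Fin 3) ℝ)
      = Matrix.of ![u, v] := by
    ext ii jj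
    fin_cases ii <;> fin_cases jj <;>
      simp [hu_def, hv_def, hP_def, hS_def, hq1_def, hs_def]
  rw [hM]
  have hu0 : u ≠ 0 := by
    intro hz
    rcases hx0y0 with hx | hy
    · have h' : (-4 : ℝ) * x0 * s = 0 := by
        have := congrFun hz 0
        simpa only [hu_def, Matrix.cons_val_zero, Pi.zero_apply] using this
      exact mul_ne_zero (mul_ne_zero (by norm_num : (-4:ℝ) ≠ 0) hx) hs0 h'
    · have h' : (-4 : ℝ) * y0 * s = 0 := by
        have := congrFun hz 1
        simpa [hu_def] using this
      exact mul_ne_zero (mul_ne_zero (by norm_num : (-4:ℝ) ≠ 0) hy) hs0 h'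
  -- rank condition
  have hrank : (Matrix.of ![u, v] : Matrix (Fin 2) (Fin 3) ℝ).rank ≤ 1
      ↔ ∃ c : ℝ, v = c • u := by
    rw [Matrix.rank_eq_finrank_span_row]
    have hrange : Set.range (Matrix.of ![u, v] : Matrix (Fin 2) (Fin 3) ℝ).row
        = ({u, v} : Set (Fin 3 → ℝ)) := Matrix.range_cons_cons_empty u v _
    rw [hrange]
    exact span_pair_finrank_le_one hu0
  rw [hrank]
  constructor
  · rintro ⟨c, hc⟩
    have h0 := congrFun hc 0
    have h1 := congrFun hc 1
    have h2 := congrFun hc 2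
    simp [hu_def, hv_def] at h0 h1 h2
    refine ⟨hdelT, ?_, ?_⟩
    · rw [hdelQ, h2]; norm_num
    · simp only [hP_def, hS_def, hq1_def, hs_def] at h0 h1 h2
      linear_combination 16 * x0 * (R ^ 2 + r ^ 2 - x0 ^ 2 - y0 ^ 2) * h1
        - 16 * y0 * (R ^ 2 + r ^ 2 - x0 ^ 2 - y0 ^ 2) * h0
        + (8 * y0 * (R ^ 2 + r ^ 2 - x0 ^ 2 - y0 ^ 2) * e
          - 8 * x0 * (R ^ 2 + r ^ 2 - x0 ^ 2 - y0 ^ 2) * f) * h2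
  · rintro ⟨-, hQ2, hJ⟩
    have hq1z : q1 = 0 := by
      rw [hdelQ] at hQ2
      exact pow_eq_zero_iff two_ne_zero |>.mp hQ2
    have hq1e : e * x0 + f * y0 + i = 0 := by rw [hq1_def] at hq1z; exact hq1z
    have h16 : 16 * s * (x0 * S - y0 * P) = 0 := by
      simp only [hS_def, hP_def, hs_def]
      linear_combination hJ + (8 * x0 * (R ^ 2 + r ^ 2 - x0 ^ 2 - y0 ^ 2) * f
        - 8 * y0 * (R ^ 2 + r ^ 2 - x0 ^ 2 - y0 ^ 2) * e) * hq1e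
    have hminor : x0 * S - y0 * P = 0 := by
      rcases mul_eq_zero.mp h16 with h' | h'
      · exact absurd h' (mul_ne_zero (by norm_num : (16:ℝ) ≠ 0) hs0)
      · exact h'
    rcases hx0y0 with hx | hy
    · have hne : (-4 : ℝ) * x0 * s ≠ 0 :=
        mul_ne_zero (mul_ne_zero (by norm_num) hx) hs0
      refine ⟨P / (-4 * x0 * s), ?_⟩
      funext jj
      fin_cases jj <;>
        simp only [hu_def, hv_def, Matrix.cons_val_zero, Matrix.cons_val_one,
          Matrix.head_cons, Pi.smul_apply, smul_eq_mul, Matrix.cons_val_two,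
          Matrix.tail_cons, Fin.mk_zero, Fin.mk_one]
      · exact (div_mul_cancel₀ P hne).symm
      · rw [div_mul_eq_mul_div, eq_div_iff hne]
        linear_combination (-4 : ℝ) * s * hminor
      · simp [hq1z]
    · have hne : (-4 : ℝ) * y0 * s ≠ 0 :=
        mul_ne_zero (mul_ne_zero (by norm_num) hy) hs0
      refine ⟨S / (-4 * y0 * s), ?_⟩
      funext jj
      fin_cases jj <;>
        simp only [hu_def, hv_def, Matrix.cons_val_zero, Matrix.cons_val_one,
          Matrix.head_cons, Pi.smul_apply, smul_eq_mul, Matrix.cons_val_two,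
          Matrix.tail_cons, Fin.mk_zero, Fin.mk_one]
      · rw [div_mul_eq_mul_div, eq_div_iff hne]
        linear_combination (4 : ℝ) * s * hminor
      · exact (div_mul_cancel₀ S hne).symm
      · simp [hq1z]
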